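/- Fix a positive integer d and set n_d = d if d is even and n_d = (d+1)/2 if d is odd. Let h(t) = h_0 + h_1 t + ⋯ + h_d t^d be a polynomial of degree at most d with integer coefficients and h_0 = 1 satisfying h_0 + h_1 + ⋯ + h_{i+1} > h_d + h_{d−1} + ⋯ + h_{d−i} for all 0 ≤ i ≤ ⌊d/2⌋ − 1. Then for every integer n ≥ n_d, the coefficients of U_n h(t) satisfy h_{i+1}(n) > h_{d−i}(n) for all 0 ≤ i ≤ ⌊d/2⌋ − 1. -/

import Mathlib

open Polynomial

/-- `ehrG d p m = ∑_{i=0}^{d} p_i * C(m+d-i, d)`, the value at `m` of the polynomial `g`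
associated to `p` by `p(t)/(1-t)^(d+1) = ∑_{m ≥ 0} g(m) tᵐ`. -/
def ehrG (d : ℕ) (p : Polynomial ℤ) (m : ℕ) : ℤ :=
  ∑ i ∈ Finset.range (d + 1), p.coeff i * ((m + d - i).choose d : ℤ)

/-- number of tuples in `[0,n)^d` with sum `N` (as an integer-valued function of `N : ℤ`). -/
def Bf (n : ℕ) : ℕ → ℤ → ℤ
  | 0, N => if N = 0 then 1 else 0
  | d+1, N => ∑ c ∈ Finset.range n, Bf n d (N - c)

/-- ℤ-safe binomial coefficient. -/
def Cc (x : ℤ) (b : ℕ) : ℤ := if x < 0 then 0 else ((x.toNat.choose b : ℕ) : ℤ)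

lemma Bf_zero (n : ℕ) (N : ℤ) : Bf n 0 N = if N = 0 then 1 else 0 := rfl

lemma Bf_succ (n d : ℕ) (N : ℤ) : Bf n (d+1) N = ∑ c ∈ Finset.range n, Bf n d (N - c) := rfl

lemma Bf_nonneg (n d : ℕ) (N : ℤ) : 0 ≤ Bf n d N := by
  induction d generalizing N with
  | zero => rw [Bf_zero]; split <;> norm_num
  | succ d ih => rw [Bf_succ]; exact Finset.sum_nonneg fun c _ => ih _

lemma Bf_neg (n d : ℕ) {N : ℤ} (hN : N < 0) : Bf n d N = 0 := by
  induction d generalizing N with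
  | zero => rw [Bf_zero]; simp [hN.ne]
  | succ d ih =>
    rw [Bf_succ]
    exact Finset.sum_eq_zero fun c _ => ih (by have : (0:ℤ) ≤ c := Int.ofNat_nonneg c; omega)

lemma Bf_gt (n d : ℕ) {N : ℤ} (hN : (d:ℤ) * ((n:ℤ) - 1) < N) : Bf n d N = 0 := by
  induction d generalizing N with
  | zero =>
    simp only [Nat.cast_zero, zero_mul] at hN
    rw [Bf_zero, if_neg (by omega : ¬ N = 0)]
  | succ d ih =>
    rw [Bf_succ]
    refine Finset.sum_eq_zero fun c hc => ih ?_
    have hcmem := Finset.mem_range.mp hc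
    have hc' : (c:ℤ) ≤ (n:ℤ) - 1 := by
      have : (c:ℤ) < (n:ℤ) := by exact_mod_cast hcmem
      omega
    push_cast at hN ⊢
    nlinarith [hN, hc']

lemma Bf_symm (n d : ℕ) (N : ℤ) : Bf n d ((d:ℤ) * ((n:ℤ) - 1) - N) = Bf n d N := by
  induction d generalizing N with
  | zero =>
    rw [Bf_zero, Bf_zero]
    simp only [Nat.cast_zero, zero_mul]
    by_cases h : N = 0
    · simp [h]
    · rw [if_neg (by omega : ¬ (0 - N = 0)), if_neg h]
  | succ d ih =>
    rw [Bf_succ, Bf_succ]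
    rw [← Finset.sum_range_reflect]
    refine Finset.sum_congr rfl fun c hc => ?_
    have hc' : c < n := Finset.mem_range.mp hc
    have h1 : ((n - 1 - c : ℕ) : ℤ) = (n:ℤ) - 1 - c := by push_cast; omega
    rw [h1]
    have h2 : ((d:ℤ)+1) * ((n:ℤ) - 1) - N - ((n:ℤ) - 1 - (c:ℤ))
        = (d:ℤ) * ((n:ℤ) - 1) - (N - c) := by ring
    push_cast
    rw [h2]
    exact ih _

lemma Bf_pos (n d : ℕ) (hn : 1 ≤ n) {N : ℤ} (h0 : 0 ≤ N) (h1 : N ≤ (d:ℤ) * ((n:ℤ) - 1)) :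
    1 ≤ Bf n d N := by
  induction d generalizing N with
  | zero => rw [Bf_zero]; simp at h1; simp [le_antisymm h1 h0]
  | succ d ih =>
    rw [Bf_succ]
    -- choose c = max 0 (N - d(n-1)), which lies in [0, n-1]
    set c : ℤ := max 0 (N - (d:ℤ) * ((n:ℤ)-1)) with hc
    have hc0 : 0 ≤ c := le_max_left _ _
    have hn' : (1:ℤ) ≤ (n:ℤ) := by exact_mod_cast hn
    have hcn : c ≤ (n:ℤ) - 1 := by
      have h2 : (N - (d:ℤ)*((n:ℤ)-1)) ≤ (n:ℤ) - 1 := by push_cast at h1; nlinarith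
      have h3 : (0:ℤ) ≤ (n:ℤ) - 1 := by omega
      exact max_le h3 h2
    have hmem : c.toNat ∈ Finset.range n := by
      rw [Finset.mem_range]; omega
    have hdn : (0:ℤ) ≤ (d:ℤ)*((n:ℤ)-1) := by
      apply mul_nonneg (Int.ofNat_nonneg d); omega
    have hcleN : c ≤ N := max_le h0 (by omega)
    have htn : (c.toNat : ℤ) = c := Int.toNat_of_nonneg hc0
    have hterm : 1 ≤ Bf n d (N - c.toNat) := by
      refine ih ?_ ?_
      · omega
      · rw [htn]
        have : N - (d:ℤ)*((n:ℤ)-1) ≤ c := le_max_right _ _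
        omega
    calc (1:ℤ) ≤ Bf n d (N - c.toNat) := hterm
    _ ≤ ∑ c' ∈ Finset.range n, Bf n d (N - c') :=
        Finset.single_le_sum (fun i _ => Bf_nonneg n d _) hmem

lemma Bf_step (n d : ℕ) (z : ℤ) :
    Bf n (d+1) (z+1) - Bf n (d+1) z = Bf n d (z+1) - Bf n d (z+1-n) := by
  rw [Bf_succ, Bf_succ, ← Finset.sum_sub_distrib]
  have : ∀ c : ℕ, Bf n d (z + 1 - c) - Bf n d (z - c) =
      (fun c' : ℕ => Bf n d (z + 1 - c')) c - (fun c' : ℕ => Bf n d (z + 1 - c')) (c+1) := by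
    intro c; simp only []; congr 2; push_cast; ring
  rw [Finset.sum_congr rfl (fun c _ => this c), Finset.sum_range_sub']
  simp

/-- weak symmetric unimodality -/
lemma Bf_mono (n : ℕ) (hn : 1 ≤ n) (d : ℕ) :
    ∀ x y : ℤ, x ≤ y → x + y ≤ (d:ℤ) * ((n:ℤ) - 1) → Bf n d x ≤ Bf n d y := by
  induction d with
  | zero =>
    intro x y hxy hsum
    simp only [Nat.cast_zero, zero_mul] at hsum
    rw [Bf_zero, Bf_zero]
    rcases lt_trichotomy x 0 with h | h | h
    · split <;> split <;> omega
    · have : y = 0 := by omega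
      simp [h, this]
    · omega
  | succ d ih =>
    -- step lemma
    have mw : ∀ z : ℤ, 2*z + 1 ≤ ((d:ℤ)+1) * ((n:ℤ) - 1) → Bf n (d+1) z ≤ Bf n (d+1) (z+1) := by
      intro z hz
      have h1 := Bf_step n d z
      have h2 : Bf n d (z+1-n) ≤ Bf n d (z+1) := by
        refine ih _ _ (by omega) ?_
        have : ((d:ℤ)+1) * ((n:ℤ)-1) = (d:ℤ)*((n:ℤ)-1) + ((n:ℤ)-1) := by ring
        omega
      omega
    -- chain
    have chain : ∀ (N : ℕ) (x : ℤ), 2*x + 2*N ≤ ((d:ℤ)+1) * ((n:ℤ)-1) + 1 →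
        Bf n (d+1) x ≤ Bf n (d+1) (x + N) := by
      intro N
      induction N with
      | zero => intro x _; simp
      | succ N ihN =>
        intro x hx
        push_cast at hx
        have h1 : Bf n (d+1) x ≤ Bf n (d+1) (x + N) := ihN x (by push_cast; omega)
        have h2 : Bf n (d+1) (x + N) ≤ Bf n (d+1) (x + N + 1) := mw (x + N) (by omega)
        push_cast
        rw [show x + ((N:ℤ)+1) = x + (N:ℤ) + 1 by ring]
        omega
    intro x y hxy hsum
    push_cast at hsum ⊢
    set D : ℤ := ((d:ℤ)+1) * ((n:ℤ)-1) with hD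
    rcases le_or_gt (2*y) D with hy | hy
    · have hN : y = x + ((y - x).toNat : ℤ) := by
        have := Int.toNat_of_nonneg (by omega : (0:ℤ) ≤ y - x); omega
      rw [hN]
      exact chain _ x (by have := Int.toNat_of_nonneg (by omega : (0:ℤ) ≤ y - x); omega)
    · have hsym : Bf n (d+1) y = Bf n (d+1) (D - y) := by
        rw [← Bf_symm n (d+1) y]; push_cast; rfl
      rw [hsym]
      have hx2 : x ≤ D - y := by omega
      have hN : D - y = x + ((D - y - x).toNat : ℤ) := by
        have := Int.toNat_of_nonneg (by omega : (0:ℤ) ≤ D - y - x); omega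
      rw [hN]
      exact chain _ x (by have := Int.toNat_of_nonneg (by omega : (0:ℤ) ≤ D - y - x); omega)

lemma Bf_one (n : ℕ) (N : ℤ) : Bf n 1 N = if 0 ≤ N ∧ N ≤ (n:ℤ) - 1 then 1 else 0 := by
  rw [Bf_succ]
  have : ∀ c ∈ Finset.range n, Bf n 0 (N - c) = if N = c then 1 else 0 := by
    intro c _; rw [Bf_zero]; split_ifs <;> omega
  rw [Finset.sum_congr rfl this]
  by_cases h : 0 ≤ N ∧ N ≤ (n:ℤ) - 1
  · have hmem : N.toNat ∈ Finset.range n := by rw [Finset.mem_range]; omega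
    rw [if_pos h]
    rw [Finset.sum_eq_single_of_mem N.toNat hmem]
    · rw [if_pos (by omega)]
    · intro c _ hc; rw [if_neg (by omega)]
  · rw [if_neg h]
    refine Finset.sum_eq_zero fun c hc => ?_
    have := Finset.mem_range.mp hc
    rw [if_neg (by push_cast at h ⊢; omega)]

lemma strict_of_ms (n : ℕ) (hn : 1 ≤ n) (d : ℕ)
    (ms : ∀ z : ℤ, -1 ≤ z → 2*z+2 ≤ (d:ℤ)*((n:ℤ)-1) → Bf n d z < Bf n d (z+1)) :
    ∀ x y : ℤ, 0 ≤ x → x < y → x + y < (d:ℤ)*((n:ℤ)-1) → Bf n d x < Bf n d y := by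
  intro x y hx hxy hsum
  set D := (d:ℤ)*((n:ℤ)-1) with hD
  rcases le_or_gt (2*y) D with hy | hy
  · have h1 : Bf n d x < Bf n d (x+1) := ms x (by omega) (by omega)
    have h2 : Bf n d (x+1) ≤ Bf n d y := Bf_mono n hn d (x+1) y (by omega) (by omega)
    omega
  · have hsym : Bf n d y = Bf n d (D - y) := by rw [← Bf_symm n d y]
    have h1 : Bf n d x < Bf n d (x+1) := ms x (by omega) (by omega)
    have h2 : Bf n d (x+1) ≤ Bf n d (D - y) := Bf_mono n hn d (x+1) (D-y) (by omega) (by omega)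
    omega

lemma Bf_strict (n : ℕ) (hn : 2 ≤ n) : ∀ e : ℕ, ∀ x y : ℤ, 0 ≤ x → x < y →
    x + y < ((e:ℤ)+2)*((n:ℤ)-1) → Bf n (e+2) x < Bf n (e+2) y := by
  intro e
  induction e with
  | zero =>
    have := strict_of_ms n (by omega) 2 ?_
    · intro x y hx hxy hsum
      refine this x y hx hxy ?_
      push_cast at hsum ⊢
      omega
    · intro z hz1 hz2
      push_cast at hz2
      have h1 : Bf n 2 (z+1) - Bf n 2 z = Bf n 1 (z+1) - Bf n 1 (z+1-(n:ℤ)) := Bf_step n 1 z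
      rw [Bf_one, Bf_one] at h1
      rw [if_pos (by constructor <;> omega : 0 ≤ z+1 ∧ z+1 ≤ (n:ℤ)-1)] at h1
      rw [if_neg (by omega : ¬ (0 ≤ z+1-(n:ℤ) ∧ z+1-(n:ℤ) ≤ (n:ℤ)-1))] at h1
      omega
  | succ e ihe =>
    have := strict_of_ms n (by omega) (e+3) ?_
    · intro x y hx hxy hsum
      refine this x y hx hxy ?_
      push_cast at hsum ⊢
      rw [show ((e:ℤ)+1+2) = (e:ℤ)+3 by ring] at hsum
      omega
    · intro z hz1 hz2
      push_cast at hz2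
      have h1 : Bf n (e+3) (z+1) - Bf n (e+3) z
          = Bf n (e+2) (z+1) - Bf n (e+2) (z+1-(n:ℤ)) := Bf_step n (e+2) z
      have hn1 : (1:ℤ) ≤ (n:ℤ) := by exact_mod_cast (by omega : 1 ≤ n)
      have hnn : (0:ℤ) ≤ ((e:ℤ)+1)*((n:ℤ)-1) := mul_nonneg (by positivity) (by omega)
      rcases lt_or_ge (z+1-(n:ℤ)) 0 with hneg | hpos
      · rw [Bf_neg n (e+2) hneg] at h1
        have h2 : 1 ≤ Bf n (e+2) (z+1) := by
          refine Bf_pos n (e+2) (by omega) (by omega) ?_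
          push_cast
          have : ((e:ℤ)+2)*((n:ℤ)-1) = ((e:ℤ)+1)*((n:ℤ)-1) + ((n:ℤ)-1) := by ring
          omega
        omega
      · have h2 : Bf n (e+2) (z+1-n) < Bf n (e+2) (z+1) := by
          refine ihe (z+1-n) (z+1) hpos (by omega) ?_
          push_cast
          have : ((e:ℤ)+3)*((n:ℤ)-1) = ((e:ℤ)+2)*((n:ℤ)-1) + ((n:ℤ)-1) := by ring
          omega
        omega

lemma Cc_neg {x : ℤ} (h : x < 0) (b : ℕ) : Cc x b = 0 := by rw [Cc, if_pos h]

lemma Cc_nonneg (x : ℤ) (b : ℕ) : 0 ≤ Cc x b := by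
  rw [Cc]; split <;> positivity

lemma Cc_cast (m : ℕ) (b : ℕ) : Cc (m : ℤ) b = (m.choose b : ℤ) := by
  rw [Cc, if_neg (by omega)]
  simp

lemma Cc_lt {x : ℤ} {b : ℕ} (h : x < b) : Cc x b = 0 := by
  rw [Cc]; split
  · rfl
  · rw [Nat.choose_eq_zero_of_lt (by omega)]; rfl

lemma Cc_pascal (x : ℤ) (b : ℕ) : Cc x (b+1) = Cc (x-1) (b+1) + Cc (x-1) b := by
  rcases le_or_gt x 0 with h | h
  · rcases lt_or_eq_of_le h with h' | h'
    · rw [Cc_neg h', Cc_neg (by omega), Cc_neg (by omega)]; ring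
    · subst h'  -- wrong direction?
      rw [Cc, if_neg (by omega), Cc_neg (by omega), Cc_neg (by omega)]
      simp
  · rw [Cc, Cc, Cc, if_neg (by omega), if_neg (by omega), if_neg (by omega)]
    have hx : x.toNat = (x-1).toNat + 1 := by omega
    rw [hx, Nat.choose_succ_succ]
    push_cast
    ring

lemma hockey (e : ℕ) (a : ℤ) (ha : a ≤ e) :
    ∀ S : ℕ, ∑ s ∈ Finset.range (S+1), Cc ((s:ℤ) + a) e = Cc ((S:ℤ) + a + 1) (e+1) := by
  intro S
  induction S with
  | zero =>
    rw [Finset.sum_range_one, show ((0:ℕ):ℤ) + a = a by push_cast; ring]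
    rcases lt_or_ge a 0 with h0 | h0
    · rw [Cc_neg h0, Cc_lt (by push_cast; omega)]
    · rcases lt_or_eq_of_le ha with h1 | h1
      · rw [Cc_lt (by push_cast; omega), Cc_lt (by push_cast; omega)]
      · rw [show a = ((e:ℕ):ℤ) by omega,
          show ((e:ℕ):ℤ) + 1 = (((e+1):ℕ):ℤ) by push_cast; ring, Cc_cast, Cc_cast]
        simp [Nat.choose_self]
  | succ S ih =>
    rw [Finset.sum_range_succ, ih]
    push_cast
    rw [show (S:ℤ) + 1 + a + 1 = ((S:ℤ) + a + 1) + 1 by ring,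
        Cc_pascal (((S:ℤ) + a + 1) + 1) e,
        show (S:ℤ) + a + 1 + 1 - 1 = (S:ℤ) + a + 1 by ring,
        show (S:ℤ) + 1 + a = (S:ℤ) + a + 1 by ring]

lemma sum_grid (g : ℕ → ℤ) (n : ℕ) : ∀ M : ℕ,
    ∑ s ∈ Finset.range (M*n), g s = ∑ m' ∈ Finset.range M, ∑ c ∈ Finset.range n, g (n*m'+c) := by
  intro M
  induction M with
  | zero => simp
  | succ M ih =>
    rw [Finset.sum_range_succ, ← ih]
    have key : ∑ s ∈ Finset.range (M*n+n), g s
        = ∑ s ∈ Finset.range (M*n), g s + ∑ s ∈ Finset.Ico (M*n) (M*n+n), g s := by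
      rw [Finset.range_eq_Ico, Finset.range_eq_Ico]
      exact (Finset.sum_Ico_consecutive g (Nat.zero_le _) (Nat.le_add_right _ _)).symm
    rw [show (M+1)*n = M*n + n by ring, key]
    congr 1
    rw [Finset.sum_Ico_eq_sum_range]
    rw [show M*n + n - M*n = n by omega]
    exact Finset.sum_congr rfl fun c _ => by rw [show M*n+c = n*M+c by ring]

lemma IDd (n : ℕ) (hn : 1 ≤ n) : ∀ e : ℕ, ∀ j m : ℕ,
    ∑ k ∈ Finset.range (m+1), Bf n (e+1) ((n:ℤ)*k - j) * Cc ((m:ℤ) - k + e) e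
    = Cc ((n:ℤ)*m - j + e) e := by
  intro e
  induction e with
  | zero =>
    intro j m
    norm_num
    have h1 : ∀ k ∈ Finset.range (m+1),
        Bf n 1 ((n:ℤ)*k - j) * Cc ((m:ℤ) - k) 0
        = if (j+n-1)/n = k then 1 else 0 := by
      intro k hk
      have hk' : k ≤ m := by have := Finset.mem_range.mp hk; omega
      have hCc : Cc ((m:ℤ) - k) 0 = 1 := by
        rw [Cc, if_neg (by push_cast; omega)]
        simp
      rw [hCc, mul_one, Bf_one]
      have hcast : ((n*k : ℕ) : ℤ) = (n:ℤ)*k := by push_cast; ring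
      have hcomm : n*k = k*n := mul_comm n k
      have e1 : (j+n-1)/n ≤ k ↔ j ≤ n*k := by
        rw [Nat.div_le_iff_le_mul_add_pred (by omega : 0 < n)]
        omega
      have e2 : k ≤ (j+n-1)/n ↔ k * n ≤ j+n-1 := Nat.le_div_iff_mul_le (by omega : 0 < n)
      by_cases h : (j+n-1)/n = k
      · have hj : j ≤ n*k := e1.mp (le_of_eq h)
        have hkn : k*n ≤ j+n-1 := e2.mp (le_of_eq h.symm)
        rw [if_pos (by constructor <;> omega), if_pos h]
      · rw [if_neg (fun hc => by
          obtain ⟨hc1, hc2⟩ := hc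
          have hj : j ≤ n*k := by omega
          have hkn : k*n ≤ j+n-1 := by omega
          exact h (le_antisymm (e1.mpr hj) (e2.mpr hkn))), if_neg h]
    rw [Finset.sum_congr rfl h1,
      Finset.sum_ite_eq (Finset.range (m+1)) ((j+n-1)/n) (fun _ => (1:ℤ))]
    have hcast2 : ((n*m : ℕ) : ℤ) = (n:ℤ)*m := by push_cast; ring
    have e3 : (j+n-1)/n ≤ m ↔ j ≤ n*m := by
      rw [Nat.div_le_iff_le_mul_add_pred (by omega : 0 < n)]
      omega
    by_cases h : (j+n-1)/n ∈ Finset.range (m+1)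
    · have hj : j ≤ n*m := e3.mp (by have := Finset.mem_range.mp h; omega)
      rw [if_pos h, Cc, if_neg (by push_cast; omega)]
      simp
    · have hj : ¬ j ≤ n*m := fun hc => h (Finset.mem_range.mpr (by have := e3.mpr hc; omega))
      rw [if_neg h, Cc, if_pos (by push_cast; omega)]
  | succ e ih =>
    intro j m
    have hky : ∀ k ∈ Finset.range (m+1),
        Bf n (e+1+1) ((n:ℤ)*k - j) * Cc ((m:ℤ)-k+((e:ℕ)+1:ℕ)) (e+1)
        = ∑ m' ∈ Finset.range (m+1), Bf n (e+2) ((n:ℤ)*k - j) * Cc ((m':ℤ)-k+e) e := by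
      intro k hk
      rw [← Finset.mul_sum]
      congr 1
      have h := hockey e ((e:ℤ)-(k:ℤ)) (by omega) m
      calc Cc ((m:ℤ)-k+((e:ℕ)+1:ℕ)) (e+1)
          = Cc ((m:ℤ)+((e:ℤ)-k)+1) (e+1) := by
            rw [show (m:ℤ)-k+(((e:ℕ)+1:ℕ):ℤ) = (m:ℤ)+((e:ℤ)-k)+1 by push_cast; ring]
        _ = ∑ s ∈ Finset.range (m+1), Cc ((s:ℤ)+((e:ℤ)-k)) e := h.symm
        _ = ∑ m' ∈ Finset.range (m+1), Cc ((m':ℤ)-k+e) e :=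
            Finset.sum_congr rfl fun s _ => by
              rw [show (s:ℤ)+((e:ℤ)-k) = (s:ℤ)-k+e by ring]
    rw [Finset.sum_congr rfl hky, Finset.sum_comm]
    -- now: ∑ m' ∑ k  Bf n (e+2) (nk-j) * Cc (m'-k+e) e
    have hinner : ∀ m' ∈ Finset.range (m+1),
        ∑ k ∈ Finset.range (m+1), Bf n (e+2) ((n:ℤ)*k - j) * Cc ((m':ℤ)-k+e) e
        = ∑ c ∈ Finset.range n, Cc ((n:ℤ)*m'-(j+c)+e) e := by
      intro m' hm'
      have hm'' : m' ≤ m := by have := Finset.mem_range.mp hm'; omega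
      have h1 : ∀ k ∈ Finset.range (m+1),
          Bf n (e+2) ((n:ℤ)*k - j) * Cc ((m':ℤ)-k+e) e
          = ∑ c ∈ Finset.range n, Bf n (e+1) ((n:ℤ)*k - (j+c)) * Cc ((m':ℤ)-k+e) e := by
        intro k _
        rw [Bf_succ n (e+1), Finset.sum_mul]
        exact Finset.sum_congr rfl fun c _ => by
          rw [show (n:ℤ)*k - j - c = (n:ℤ)*k - ((j:ℤ)+c) by ring]
      rw [Finset.sum_congr rfl h1, Finset.sum_comm]
      refine Finset.sum_congr rfl fun c _ => ?_
      have hshrink : ∑ k ∈ Finset.range (m+1), Bf n (e+1) ((n:ℤ)*k - (j+c)) * Cc ((m':ℤ)-k+e) e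
          = ∑ k ∈ Finset.range (m'+1), Bf n (e+1) ((n:ℤ)*k - (j+c)) * Cc ((m':ℤ)-k+e) e := by
        symm
        refine Finset.sum_subset ?_ ?_
        · intro x hx
          rw [Finset.mem_range] at hx ⊢
          omega
        · intro k hk hk'
          rw [Finset.mem_range] at hk hk'
          have : Cc ((m':ℤ)-k+e) e = 0 := Cc_lt (by push_cast; omega)
          rw [this, mul_zero]
      rw [hshrink]
      have := ih (j+c) m'
      rw [show ((j+c : ℕ) : ℤ) = (j:ℤ)+c by push_cast; ring] at this
      rw [this]
    rw [Finset.sum_congr rfl hinner]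
    -- reflect c and apply grid
    have hrefl : ∀ m' ∈ Finset.range (m+1),
        ∑ c ∈ Finset.range n, Cc ((n:ℤ)*m'-(j+c)+e) e
        = ∑ c ∈ Finset.range n, Cc (((n*m'+c : ℕ):ℤ)-((n:ℤ)-1)-j+e) e := by
      intro m' _
      rw [← Finset.sum_range_reflect (fun c => Cc (((n*m'+c : ℕ):ℤ)-((n:ℤ)-1)-j+e) e) n]
      refine Finset.sum_congr rfl fun c hc => ?_
      have hc' : c < n := Finset.mem_range.mp hc
      have h2 : ((n*m'+(n-1-c) : ℕ) : ℤ) = (n:ℤ)*m' + ((n:ℤ)-1-c) := by push_cast [Nat.sub_sub]; omega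
      rw [h2, show (n:ℤ)*m' + ((n:ℤ)-1-c) - ((n:ℤ)-1)-j+e = (n:ℤ)*m'-(j+c)+e by push_cast; ring]
    rw [Finset.sum_congr rfl hrefl, ← sum_grid (fun s => Cc (((s:ℕ):ℤ)-((n:ℤ)-1)-j+e) e) n (m+1)]
    -- split off the zero low part
    have hsplit : ∑ s ∈ Finset.range ((m+1)*n), Cc (((s:ℕ):ℤ)-((n:ℤ)-1)-j+e) e
        = ∑ t ∈ Finset.range (n*m+1), Cc ((t:ℤ)-j+e) e := by
      have hkey : ∑ s ∈ Finset.range ((m+1)*n), Cc (((s:ℕ):ℤ)-((n:ℤ)-1)-j+e) e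
          = ∑ s ∈ Finset.range (n-1), Cc (((s:ℕ):ℤ)-((n:ℤ)-1)-j+e) e
            + ∑ s ∈ Finset.Ico (n-1) ((m+1)*n), Cc (((s:ℕ):ℤ)-((n:ℤ)-1)-j+e) e := by
        rw [Finset.range_eq_Ico, Finset.range_eq_Ico]
        exact (Finset.sum_Ico_consecutive _ (Nat.zero_le _) (by have := Nat.le_mul_of_pos_left n (show 0 < m+1 by omega); omega)).symm
      rw [hkey]
      have hzero : ∑ s ∈ Finset.range (n-1), Cc (((s:ℕ):ℤ)-((n:ℤ)-1)-j+e) e = 0 := by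
        refine Finset.sum_eq_zero fun s hs => ?_
        have := Finset.mem_range.mp hs
        exact Cc_lt (by push_cast; omega)
      rw [hzero, zero_add, Finset.sum_Ico_eq_sum_range]
      rw [show (m+1)*n - (n-1) = n*m+1 by cases n with | zero => omega | succ n' => ring_nf; omega]
      refine Finset.sum_congr rfl fun t _ => ?_
      rw [show (((n-1+t : ℕ)):ℤ)-((n:ℤ)-1)-j+e = (t:ℤ)-j+e by push_cast [Nat.cast_sub]; omega]
    rw [hsplit]
    have h := hockey e ((e:ℤ)-(j:ℤ)) (by omega) (n*m)
    calc ∑ t ∈ Finset.range (n*m+1), Cc ((t:ℤ)-j+e) e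
        = ∑ t ∈ Finset.range (n*m+1), Cc ((t:ℤ)+((e:ℤ)-j)) e :=
          Finset.sum_congr rfl fun t _ => by rw [show (t:ℤ)-j+e = (t:ℤ)+((e:ℤ)-j) by ring]
      _ = Cc (((n*m : ℕ):ℤ)+((e:ℤ)-j)+1) (e+1) := h
      _ = Cc ((n:ℤ)*m-j+((e:ℕ)+1:ℕ)) (e+1) := by
          rw [show (((n*m : ℕ)):ℤ)+((e:ℤ)-j)+1 = (n:ℤ)*m-j+(((e:ℕ)+1:ℕ):ℤ) by push_cast; ring]

open Polynomial in
/-- `ehrG d p m = ∑_{i=0}^{d} p_i * C(m+d-i, d)` (copy of the statement's definition). -/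
def ehrG' (d : ℕ) (p : Polynomial ℤ) (m : ℕ) : ℤ :=
  ∑ i ∈ Finset.range (d + 1), p.coeff i * ((m + d - i).choose d : ℤ)

lemma IDfull (n : ℕ) (hn : 1 ≤ n) (d : ℕ) (j m : ℕ) (hj : j ≤ d) :
    ∑ i ∈ Finset.range (d+1), Bf n (d+1) ((n:ℤ)*i - j) * Cc ((m:ℤ) - i + d) d
    = Cc ((n:ℤ)*m - j + d) d := by
  have base := IDd n hn d j m
  set M := max m d with hM
  have ext1 : ∑ i ∈ Finset.range (m+1), Bf n (d+1) ((n:ℤ)*i - j) * Cc ((m:ℤ) - i + d) d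
      = ∑ i ∈ Finset.range (M+1), Bf n (d+1) ((n:ℤ)*i - j) * Cc ((m:ℤ) - i + d) d := by
    refine Finset.sum_subset ?_ ?_
    · intro x hx; rw [Finset.mem_range] at hx ⊢; omega
    · intro i hi hi'
      rw [Finset.mem_range] at hi hi'
      rw [Cc_lt (by push_cast; omega), mul_zero]
  have ext2 : ∑ i ∈ Finset.range (d+1), Bf n (d+1) ((n:ℤ)*i - j) * Cc ((m:ℤ) - i + d) d
      = ∑ i ∈ Finset.range (M+1), Bf n (d+1) ((n:ℤ)*i - j) * Cc ((m:ℤ) - i + d) d := by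
    refine Finset.sum_subset ?_ ?_
    · intro x hx; rw [Finset.mem_range] at hx ⊢; omega
    · intro i hi hi'
      rw [Finset.mem_range] at hi hi'
      have h5 : ((d:ℤ)+1) ≤ (i:ℤ) := by push_cast; omega
      have h6 : (n:ℤ)*((d:ℤ)+1) ≤ (n:ℤ)*i :=
        mul_le_mul_of_nonneg_left h5 (by positivity)
      have hjz : (j:ℤ) ≤ (d:ℤ) := by exact_mod_cast hj
      rw [Bf_gt n (d+1) (by push_cast; nlinarith [h6, hjz]), zero_mul]
  rw [ext2, ← ext1, base]

open Polynomial in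
lemma ehrG'_eq (d : ℕ) (q : ℕ → ℤ) (m : ℕ) :
    ehrG' d (∑ k ∈ Finset.range (d+1), C (q k) * X^k) m
    = ∑ i ∈ Finset.range (d+1), q i * ((m + d - i).choose d : ℤ) := by
  refine Finset.sum_congr rfl fun i hi => ?_
  congr 1
  rw [Polynomial.finset_sum_coeff]
  have : ∀ k ∈ Finset.range (d+1), (C (q k) * X^k).coeff i = if k = i then q k else 0 := by
    intro k _
    rw [Polynomial.coeff_C_mul, Polynomial.coeff_X_pow]
    by_cases h : k = i
    · subst h; rw [if_pos rfl, if_pos rfl, mul_one]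
    · rw [if_neg (fun hh => h hh.symm), mul_zero, if_neg h]
  rw [Finset.sum_congr rfl this, Finset.sum_ite_eq' (Finset.range (d+1)) i q, if_pos hi]

open Polynomial in
lemma ehrG'_inj (d : ℕ) (p q : Polynomial ℤ) (hp : p.natDegree ≤ d) (hq : q.natDegree ≤ d)
    (h : ∀ m : ℕ, ehrG' d p m = ehrG' d q m) : p = q := by
  have key : ∀ N : ℕ, N ≤ d → p.coeff N = q.coeff N := by
    intro N
    induction N using Nat.strong_induction_on with
    | _ N ih =>
      intro hN
      have hm := h N
      unfold ehrG' at hm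
      have split1 : ∀ (r : Polynomial ℤ), ∑ i ∈ Finset.range (d + 1), r.coeff i * (((N:ℕ) + d - i).choose d : ℤ)
          = ∑ i ∈ Finset.range (N+1), r.coeff i * (((N:ℕ) + d - i).choose d : ℤ) := by
        intro r
        symm
        refine Finset.sum_subset (by intro x hx; rw [Finset.mem_range] at hx ⊢; omega) ?_
        intro i hi hi'
        rw [Finset.mem_range] at hi hi'
        rw [Nat.choose_eq_zero_of_lt (by omega), Int.natCast_zero, mul_zero]
      rw [split1 p, split1 q, Finset.sum_range_succ, Finset.sum_range_succ] at hm
      have hlast : (N + d - N).choose d = 1 := by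
        rw [show N + d - N = d by omega, Nat.choose_self]
      rw [hlast] at hm
      have hrest : ∑ i ∈ Finset.range N, p.coeff i * (((N:ℕ) + d - i).choose d : ℤ)
          = ∑ i ∈ Finset.range N, q.coeff i * (((N:ℕ) + d - i).choose d : ℤ) := by
        refine Finset.sum_congr rfl fun i hi => ?_
        rw [Finset.mem_range] at hi
        rw [ih i hi (by omega)]
      rw [hrest] at hm
      push_cast at hm
      omega
  apply Polynomial.ext
  intro N
  rcases le_or_gt N d with hN | hN
  · exact key N hN
  · rw [Polynomial.coeff_eq_zero_of_natDegree_lt (by omega),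
      Polynomial.coeff_eq_zero_of_natDegree_lt (by omega)]

lemma Bf_strict' (n : ℕ) (hn : 2 ≤ n) (d : ℕ) (hd : 2 ≤ d) :
    ∀ x y : ℤ, 0 ≤ x → x < y → x + y < (d:ℤ)*((n:ℤ)-1) → Bf n d x < Bf n d y := by
  obtain ⟨e, rfl⟩ : ∃ e, d = e + 2 := ⟨d - 2, by omega⟩
  intro x y hx hxy hsum
  refine Bf_strict n hn e x y hx hxy ?_
  push_cast at hsum ⊢
  linarith

/-- the quantity `A j` -/
def Af (n d K : ℕ) (j : ℤ) : ℤ :=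
  Bf n (d+1) ((n:ℤ)*K - j) - Bf n (d+1) ((n:ℤ)*K - ((d:ℤ)+1-j))

lemma hx2 (n d K : ℕ) (hK : 2*K ≤ d) : 2*((n:ℤ)*K) ≤ (n:ℤ)*d := by
  have h1 : ((2*K : ℕ):ℤ) ≤ (d:ℤ) := by exact_mod_cast hK
  have h2 := mul_le_mul_of_nonneg_left h1 (show (0:ℤ) ≤ n by positivity)
  push_cast at h2
  linarith

lemma hx2odd (n d K : ℕ) (hd1 : 1 ≤ d) (hK : 2*K ≤ d) (hpar : d % 2 = 1) :
    2*((n:ℤ)*K) ≤ (n:ℤ)*d - n := by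
  have hK' : 2*K ≤ d - 1 := by omega
  have h1 : ((2*K : ℕ):ℤ) ≤ ((d-1 : ℕ):ℤ) := by exact_mod_cast hK'
  have h2 := mul_le_mul_of_nonneg_left h1 (show (0:ℤ) ≤ n by positivity)
  push_cast [Nat.cast_sub (by omega : 1 ≤ d)] at h2
  nlinarith [h2]

lemma Af_step (n d K : ℕ) (hn2 : 2 ≤ n) (hd2 : 2 ≤ d) (hK : 2*K ≤ d)
    (hd2n : (d:ℤ) ≤ 2*(n:ℤ)-1) (heven : d % 2 = 0 → (d:ℤ) ≤ (n:ℤ))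
    (j : ℤ) (hj : 1 ≤ j) (hjd : 2*j ≤ d) :
    0 ≤ Af n d K j - Af n d K (j+1) := by
  have hxx := hx2 n d K hK
  unfold Af
  set x := (n:ℤ)*K with hxdef
  have hD : ((d+1 : ℕ):ℤ)*((n:ℤ)-1) = (n:ℤ)*d + n - d - 1 := by push_cast; ring
  have t1 : Bf n (d+1) (x-j-1) ≤ Bf n (d+1) (x-j) := by
    refine Bf_mono n (by omega) (d+1) _ _ (by omega) ?_
    rw [hD]
    rcases Nat.even_or_odd d with hpar | hpar
    · have hdn := heven (Nat.even_iff.mp hpar)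
      omega
    · have := hx2odd n d K (by omega) hK (Nat.odd_iff.mp hpar)
      omega
  have t2 : Bf n (d+1) (x-((d:ℤ)+1-(j+1))-1) ≤ Bf n (d+1) (x-((d:ℤ)+1-(j+1))) := by
    refine Bf_mono n (by omega) (d+1) _ _ (by omega) ?_
    rw [hD]
    omega
  have e1 : x - ((d:ℤ)+1-(j+1)) - 1 = x - ((d:ℤ)+1-j) := by ring
  rw [e1] at t2
  have e2 : x - (j+1) = x - j - 1 := by ring
  rw [e2]
  omega

lemma Af_zero (n d K : ℕ) (hn2 : 2 ≤ n) (hd2 : 2 ≤ d) (hK : 2*K ≤ d) :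
    1 ≤ Af n d K 0 := by
  have hxx := hx2 n d K hK
  unfold Af
  set x := (n:ℤ)*K with hxdef
  have hx0 : (0:ℤ) ≤ x := by positivity
  have hD : ((d+1 : ℕ):ℤ)*((n:ℤ)-1) = (n:ℤ)*d + n - d - 1 := by push_cast; ring
  have hnd : 2*(d:ℤ) ≤ (n:ℤ)*d := by
    have h1 := mul_le_mul_of_nonneg_right (show (2:ℤ) ≤ n by exact_mod_cast hn2)
      (show (0:ℤ) ≤ d by positivity)
    linarith
  rw [show x - (0:ℤ) = x by ring, show x - ((d:ℤ)+1-0) = x - ((d:ℤ)+1) by ring]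
  rcases lt_or_ge (x - ((d:ℤ)+1)) 0 with hneg | hpos
  · rw [Bf_neg n (d+1) hneg]
    have hpos1 : 1 ≤ Bf n (d+1) x := by
      refine Bf_pos n (d+1) (by omega) hx0 ?_
      rw [hD]
      omega
    omega
  · have hstrict : Bf n (d+1) (x - ((d:ℤ)+1)) < Bf n (d+1) x := by
      refine Bf_strict' n hn2 (d+1) (by omega) _ _ hpos (by omega) ?_
      rw [hD]
      omega
    omega

lemma Af_J (n d K : ℕ) (hn2 : 2 ≤ n) (hd2 : 2 ≤ d) (hK : 2*K ≤ d)
    (hd2n : (d:ℤ) ≤ 2*(n:ℤ)-1) (heven : d % 2 = 0 → (d:ℤ) ≤ (n:ℤ)) :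
    0 ≤ Af n d K (((d/2 : ℕ) : ℤ)) := by
  set J : ℕ := d/2 with hJ
  have hstep := Af_step n d K hn2 hd2 hK hd2n heven (J:ℤ) (by omega) (by omega)
  rcases Nat.even_or_odd d with hpar | hpar
  · have hp := Nat.even_iff.mp hpar
    have hdJ : (d:ℤ) = 2*(J:ℤ) := by omega
    have hrefl : Af n d K ((J:ℤ)+1) = - Af n d K (J:ℤ) := by
      unfold Af
      rw [show (d:ℤ)+1-((J:ℤ)+1) = (J:ℤ) by omega,
        show (d:ℤ)+1-(J:ℤ) = (J:ℤ)+1 by omega]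
      ring
    omega
  · have hp := Nat.odd_iff.mp hpar
    have hzero : Af n d K ((J:ℤ)+1) = 0 := by
      unfold Af
      rw [show (d:ℤ)+1-((J:ℤ)+1) = (J:ℤ)+1 by omega]
      ring
    omega

/-- Abel summation identity -/
lemma abel_id (g a S : ℕ → ℤ) (h0 : S 0 = 0) (hrec : ∀ t, S (t+1) = S t + g t) :
    ∀ J : ℕ, ∑ t ∈ Finset.range (J+1), g t * a t
      = S (J+1) * a J + ∑ t ∈ Finset.range J, S (t+1) * (a t - a (t+1)) := by
  intro J
  induction J with
  | zero => simp [hrec 0, h0]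
  | succ J ih =>
    rw [Finset.sum_range_succ, ih, Finset.sum_range_succ, hrec (J+1)]
    ring

lemma Af_reflect (n d K : ℕ) (z : ℤ) : Af n d K ((d:ℤ)+1-z) = - Af n d K z := by
  unfold Af
  rw [show (d:ℤ)+1-((d:ℤ)+1-z) = z by ring]
  ring

lemma coeff_CXsum (d : ℕ) (q : ℕ → ℤ) (t : ℕ) :
    (∑ k ∈ Finset.range (d+1), Polynomial.C (q k) * Polynomial.X^k).coeff t
    = if t ∈ Finset.range (d+1) then q t else 0 := by
  rw [Polynomial.finset_sum_coeff]
  have h1 : ∀ k ∈ Finset.range (d+1),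
      (Polynomial.C (q k) * Polynomial.X^k).coeff t = if k = t then q k else 0 := by
    intro k _
    rw [Polynomial.coeff_C_mul, Polynomial.coeff_X_pow]
    by_cases h : k = t
    · subst h; rw [if_pos rfl, if_pos rfl, mul_one]
    · rw [if_neg (fun hh => h hh.symm), mul_zero, if_neg h]
  rw [Finset.sum_congr rfl h1, Finset.sum_ite_eq' (Finset.range (d+1)) t q]


theorem stmt19 (d : ℕ) (hd : 0 < d)
    (h : Polynomial ℤ) (hdeg : h.natDegree ≤ d) (h0 : h.coeff 0 = 1)
    -- h_0 + ⋯ + h_{i+1} > h_d + ⋯ + h_{d-i} for 0 ≤ i ≤ ⌊d/2⌋ - 1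
    (hineq : ∀ i : ℕ, i + 1 ≤ d / 2 →
      ∑ j ∈ Finset.Icc (d - i) d, h.coeff j < ∑ j ∈ Finset.range (i + 2), h.coeff j)
    -- n ≥ n_d, where n_d = d if d is even and n_d = (d+1)/2 if d is odd
    (n : ℕ) (hn : (if d % 2 = 0 then d else (d + 1) / 2) ≤ n)
    (Uh : Polynomial ℤ) (hUdeg : Uh.natDegree ≤ d)
    (hU : ∀ m : ℕ, ehrG d Uh m = ehrG d h (n * m)) :
    ∀ i : ℕ, i + 1 ≤ d / 2 → Uh.coeff (d - i) < Uh.coeff (i + 1) := by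
  intro i hi
  have hd2 : 2 ≤ d := by omega
  set K : ℕ := i + 1 with hKdef
  have hK1 : 1 ≤ K := by omega
  have hK : 2*K ≤ d := by omega
  have hn2 : 2 ≤ n := by
    by_cases hpar : d % 2 = 0
    · rw [if_pos hpar] at hn; omega
    · rw [if_neg hpar] at hn; omega
  have hn1 : 1 ≤ n := by omega
  have heven : d % 2 = 0 → (d:ℤ) ≤ (n:ℤ) := by
    intro hpar
    rw [if_pos hpar] at hn
    exact_mod_cast hn
  have hd2n : (d:ℤ) ≤ 2*(n:ℤ)-1 := by
    by_cases hpar : d % 2 = 0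
    · rw [if_pos hpar] at hn; push_cast; omega
    · rw [if_neg hpar] at hn; push_cast; omega
  -- the candidate coefficients and polynomial
  set q : ℕ → ℤ := fun k => ∑ j ∈ Finset.range (d+1), h.coeff j * Bf n (d+1) ((n:ℤ)*k - j)
    with hqdef
  set Q : Polynomial ℤ := ∑ k ∈ Finset.range (d+1), Polynomial.C (q k) * Polynomial.X^k
    with hQdef
  have hQcoeff : ∀ t, Q.coeff t = if t ∈ Finset.range (d+1) then q t else 0 := by
    intro t; rw [hQdef]; exact coeff_CXsum d q t
  have hQdeg : Q.natDegree ≤ d := by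
    rw [Polynomial.natDegree_le_iff_coeff_eq_zero]
    intro N hN
    rw [hQcoeff N, if_neg (by rw [Finset.mem_range]; omega)]
  -- Q has the right ehrhart values
  have hQehr : ∀ m : ℕ, ehrG d Q m = ehrG d h (n*m) := by
    intro m
    unfold ehrG
    have step1 : ∀ i' ∈ Finset.range (d+1),
        Q.coeff i' * ((m + d - i').choose d : ℤ)
        = ∑ j ∈ Finset.range (d+1),
            h.coeff j * (Bf n (d+1) ((n:ℤ)*i' - j) * Cc ((m:ℤ) - i' + d) d) := by
      intro i' hi'
      have hi'' : i' ≤ d := by have := Finset.mem_range.mp hi'; omega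
      rw [hQcoeff i', if_pos hi', hqdef]
      have hCc : ((m + d - i').choose d : ℤ) = Cc ((m:ℤ) - i' + d) d := by
        rw [show (m:ℤ) - i' + d = ((m + d - i' : ℕ) : ℤ) by push_cast [Nat.cast_sub]; omega,
          Cc_cast]
      rw [hCc, Finset.sum_mul]
      exact Finset.sum_congr rfl fun j _ => by ring
    rw [Finset.sum_congr rfl step1, Finset.sum_comm]
    refine Finset.sum_congr rfl fun j hj => ?_
    have hj' : j ≤ d := by have := Finset.mem_range.mp hj; omega
    rw [← Finset.mul_sum, IDfull n hn1 d j m hj']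
    congr 1
    rw [show (n:ℤ)*m - j + d = ((n*m + d - j : ℕ) : ℤ) by push_cast [Nat.cast_sub]; omega,
      Cc_cast]
  -- uniqueness
  have hUQ : Uh = Q := by
    refine ehrG'_inj d Uh Q hUdeg hQdeg fun m => ?_
    have b1 : ehrG' d Uh m = ehrG d Uh m := rfl
    have b2 : ehrG' d Q m = ehrG d Q m := rfl
    rw [b1, b2, hU m, hQehr m]
  rw [hUQ, hQcoeff, hQcoeff, if_pos (by rw [Finset.mem_range]; omega),
    if_pos (by rw [Finset.mem_range]; omega)]
  -- express the difference via Af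
  have hqd : q (d - i) = ∑ j ∈ Finset.range (d+1),
      h.coeff j * Bf n (d+1) ((n:ℤ)*K - ((d:ℤ)+1-j)) := by
    rw [hqdef]
    refine Finset.sum_congr rfl fun j hj => ?_
    congr 1
    have e3 : ((d - i : ℕ) : ℤ) = (d:ℤ)+1-K := by push_cast [Nat.cast_sub (by omega : i ≤ d)]; omega
    rw [e3, show (n:ℤ)*((d:ℤ)+1-K) - j
        = ((d+1 : ℕ):ℤ)*((n:ℤ)-1) - ((n:ℤ)*K - ((d:ℤ)+1-j)) by push_cast; ring,
      Bf_symm]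
  have key : q K - q (d-i) = ∑ j ∈ Finset.range (d+1), h.coeff j * Af n d K (j:ℤ) := by
    rw [hqd, hqdef, ← Finset.sum_sub_distrib]
    refine Finset.sum_congr rfl fun j _ => ?_
    unfold Af
    ring
  -- main positivity
  suffices hpos : 1 ≤ ∑ j ∈ Finset.range (d+1), h.coeff j * Af n d K (j:ℤ) by omega
  rw [Finset.sum_range_succ']
  have hzero : h.coeff 0 * Af n d K ((0:ℕ):ℤ) = Af n d K 0 := by
    rw [h0, Nat.cast_zero, one_mul]
  rw [hzero]
  have hA0 := Af_zero n d K hn2 hd2 hK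
  -- remaining sum is nonneg
  suffices hT : 0 ≤ ∑ j ∈ Finset.range d, h.coeff (j+1) * Af n d K ((j+1 : ℕ):ℤ) by omega
  set J : ℕ := d/2 with hJdef
  have hJ1 : 1 ≤ J := by omega
  have hJd : J ≤ d := by omega
  set F : ℕ → ℤ := fun j => h.coeff (j+1) * Af n d K ((j+1 : ℕ):ℤ) with hFdef
  -- split the sum
  have hsplit : ∑ j ∈ Finset.range d, F j
      = ∑ j ∈ Finset.range J, F j + ∑ j ∈ Finset.Ico J d, F j := by
    rw [Finset.range_eq_Ico, ← Finset.sum_Ico_consecutive F (Nat.zero_le J) hJd,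
      ← Finset.range_eq_Ico]
  -- reindex the upper half
  have hupper : ∑ j ∈ Finset.Ico J d, F j = ∑ t ∈ Finset.range (d-J), F (d-1-t) := by
    rw [Finset.sum_Ico_eq_sum_range, ← Finset.sum_range_reflect (fun t => F (J + t)) (d-J)]
    exact Finset.sum_congr rfl fun t ht => by
      have := Finset.mem_range.mp ht
      congr 1
      omega
  -- the reflected terms
  have hFr : ∀ t, t < J → F (d-1-t) = - (h.coeff (d-t) * Af n d K ((t+1 : ℕ):ℤ)) := by
    intro t ht
    rw [hFdef]
    simp only []
    rw [show d-1-t+1 = d-t by omega]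
    have hAf : Af n d K ((d-t : ℕ):ℤ) = - Af n d K ((t+1 : ℕ):ℤ) := by
      rw [show ((d-t : ℕ):ℤ) = (d:ℤ)+1-((t+1 : ℕ):ℤ) by push_cast [Nat.cast_sub (by omega : t ≤ d)]; omega]
      exact Af_reflect n d K _
    rw [hAf]
    ring
  -- reduce to the paired sum
  have hpair : ∑ j ∈ Finset.range d, F j
      = ∑ t ∈ Finset.range J, (h.coeff (t+1) - h.coeff (d-t)) * Af n d K ((t+1 : ℕ):ℤ) := by
    rw [hsplit, hupper]
    rcases Nat.even_or_odd d with hpar | hpar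
    · have hp := Nat.even_iff.mp hpar
      have hdJ : d - J = J := by omega
      rw [hdJ, ← Finset.sum_add_distrib]
      refine Finset.sum_congr rfl fun t ht => ?_
      have ht' := Finset.mem_range.mp ht
      rw [hFr t ht', hFdef]
      simp only []
      ring
    · have hp := Nat.odd_iff.mp hpar
      have hdJ : d - J = J + 1 := by omega
      rw [hdJ, Finset.sum_range_succ]
      have hmid : F (d-1-J) = 0 := by
        rw [hFdef]
        simp only []
        have hAf0 : Af n d K ((d-1-J+1 : ℕ):ℤ) = 0 := by
          unfold Af
          rw [show (d:ℤ)+1-((d-1-J+1 : ℕ):ℤ) = ((d-1-J+1 : ℕ):ℤ) by push_cast [Nat.cast_sub]; omega]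
          ring
        rw [hAf0, mul_zero]
      rw [hmid, add_zero, ← Finset.sum_add_distrib]
      refine Finset.sum_congr rfl fun t ht => ?_
      have ht' := Finset.mem_range.mp ht
      rw [hFr t ht', hFdef]
      simp only []
      ring
  rw [hpair]
  -- Abel summation
  set g : ℕ → ℤ := fun t => h.coeff (t+1) - h.coeff (d-t) with hgdef
  set a : ℕ → ℤ := fun t => Af n d K ((t+1 : ℕ):ℤ) with hadef
  set S : ℕ → ℤ := fun t => ∑ t' ∈ Finset.range t, g t' with hSdef
  have hS0 : S 0 = 0 := by rw [hSdef]; simp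
  have hSrec : ∀ t, S (t+1) = S t + g t := by
    intro t; rw [hSdef]; simp only []; rw [Finset.sum_range_succ]
  -- partial sums are nonneg
  have hSpos : ∀ t, 1 ≤ t → t ≤ J → 0 ≤ S t := by
    intro t ht1 htJ
    have hin := hineq (t-1) (by omega)
    rw [show t-1+2 = t+1 by omega, show d-(t-1) = d-t+1 by omega] at hin
    have hA : ∑ t' ∈ Finset.range t, h.coeff (t'+1)
        = ∑ j ∈ Finset.range (t+1), h.coeff j - h.coeff 0 := by
      rw [Finset.sum_range_succ' (fun j => h.coeff j) t]
      ring
    have hB : ∑ t' ∈ Finset.range t, h.coeff (d-t')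
        = ∑ j ∈ Finset.Icc (d-t+1) d, h.coeff j := by
      rw [← Finset.Ico_add_one_right_eq_Icc, Finset.sum_Ico_eq_sum_range,
        show d+1-(d-t+1) = t by omega,
        ← Finset.sum_range_reflect (fun t' => h.coeff (d - t')) t]
      refine Finset.sum_congr rfl fun j hj => ?_
      have := Finset.mem_range.mp hj
      congr 1
      omega
    rw [hSdef]
    simp only [hgdef]
    rw [Finset.sum_sub_distrib, hA, hB, h0]
    omega
  obtain ⟨J1, hJ1eq⟩ : ∃ J1, J = J1 + 1 := ⟨J - 1, by omega⟩
  rw [hJ1eq, abel_id g a S hS0 hSrec J1]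
  have term1 : 0 ≤ S (J1+1) * a J1 := by
    refine mul_nonneg (hSpos (J1+1) (by omega) (by omega)) ?_
    rw [hadef]
    simp only []
    have := Af_J n d K hn2 hd2 hK hd2n heven
    rw [show ((J1+1 : ℕ):ℤ) = ((d/2 : ℕ):ℤ) by push_cast; omega]
    exact this
  have term2 : 0 ≤ ∑ t ∈ Finset.range J1, S (t+1) * (a t - a (t+1)) := by
    refine Finset.sum_nonneg fun t ht => ?_
    have ht' := Finset.mem_range.mp ht
    refine mul_nonneg (hSpos (t+1) (by omega) (by omega)) ?_
    rw [hadef]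
    simp only []
    have hstep := Af_step n d K hn2 hd2 hK hd2n heven ((t:ℤ)+1) (by omega) (by omega)
    rw [show ((t+1 : ℕ):ℤ) = (t:ℤ)+1 by push_cast; ring,
      show ((t+1+1 : ℕ):ℤ) = ((t:ℤ)+1)+1 by push_cast; ring]
    omega
  omega
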